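/- For every pair of real numbers (λ, μ), the dual quaternion polynomial identity C = (t - k - ε((1-μ)j - λi)) · (t + k - ε(λi + μj)) holds, where C = t² + 1 - ε(jt + i). In particular, C admits a two-parameter family of factorizations into linear factors. -/

import Mathlib

open Polynomial TrivSqZeroExt

noncomputable section

/-- The dual quaternions ℍ[ε], ε central with ε² = 0. -/
abbrev DH := DualNumber (Quaternion ℝ)

def qi : Quaternion ℝ := ⟨0,1,0,0⟩
def qj : Quaternion ℝ := ⟨0,0,1,0⟩
def qk : Quaternion ℝ := ⟨0,0,0,1⟩

def ε : DH := DualNumber.eps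

/-- Dual quaternion conjugation: quaternion conjugation extended ℝ[ε]-linearly. -/
def dconj (q : DH) : DH := ⟨star q.fst, star q.snd⟩

/-- The circular translation polynomial C = t² + 1 - ε(jt + i). -/
def Cpoly : Polynomial DH := X^2 + 1 - C (ε * inl qj) * X - C (ε * inl qi)

/-- Expansion of a product of two monic linear polynomials over a ring. -/
lemma linear_mul_linear {R : Type} [Ring R] (a b : R) :
    ((X : R[X]) - C a) * (X - C b) = X^2 - C (a + b) * X + C (a * b) := by
  rw [sub_mul, mul_sub, mul_sub, (commute_X (C b)).eq]
  simp [sq, C_mul, C_add, add_mul]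
  abel

/-- for every (λ, μ) ∈ ℝ², the identity
C = (t - k - ε((1-μ)j - λi)) · (t + k - ε(λi + μj)) holds, so C admits a
two-parameter family of factorizations into linear factors. -/
theorem circular_translation_factorizations (l m : ℝ) :
    Cpoly =
      (X - C (TrivSqZeroExt.inl qk + ε * TrivSqZeroExt.inl ((1 - m) • qj - l • qi))) *
      (X - C (-TrivSqZeroExt.inl qk + ε * TrivSqZeroExt.inl (l • qi + m • qj))) := by
  have hsum : (TrivSqZeroExt.inl qk + ε * TrivSqZeroExt.inl ((1 - m) • qj - l • qi) : DH) +
      (-TrivSqZeroExt.inl qk + ε * TrivSqZeroExt.inl (l • qi + m • qj)) = ε * inl qj := by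
    ext <;>
      simp [ε, TrivSqZeroExt.fst_mul, TrivSqZeroExt.snd_mul] <;> simp [qi, qj, qk, Quaternion.ext_iff] <;>
      ring
  have hprod : (TrivSqZeroExt.inl qk + ε * TrivSqZeroExt.inl ((1 - m) • qj - l • qi) : DH) *
      (-TrivSqZeroExt.inl qk + ε * TrivSqZeroExt.inl (l • qi + m • qj)) = 1 - ε * inl qi := by
    ext <;>
      simp [ε, TrivSqZeroExt.fst_mul, TrivSqZeroExt.snd_mul] <;>
      simp [qi, qj, qk, Quaternion.ext_iff,
        Quaternion.re_mul, Quaternion.imI_mul, Quaternion.imJ_mul, Quaternion.imK_mul,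
        Quaternion.re_one, Quaternion.imI_one, Quaternion.imJ_one, Quaternion.imK_one] <;>
      ring
  rw [linear_mul_linear, hsum, hprod, Cpoly, C_sub, C_1]
  abel
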